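/- Fix reals μ_S > μ_D > 0 and positive reals p_S, p_D, p_V. For n ∈ ℕ set P_S(n) := e^{−μ_S}·μ_S^n/n!, P_D(n) := e^{−μ_D}·μ_D^n/n!, P_V(n) := 1 if n = 0 and 0 otherwise, p^{int}(n) := p_S·P_S(n) + p_D·P_D(n) + p_V·P_V(n), and for ω ∈ {S,D,V} set p^{int}_{ω|n} := p_ω·P_ω(n)/p^{int}(n) and p^{int}_{ω,0} := p_ω·P_ω(0). Let q : ℕ → ℝ satisfy q(n) ≥ 0 for all n and Σ_n q(n) ≤ 1 (the series converging), and set q_ω := Σ'_n p^{int}_{ω|n}·q(n). Define Δ := −(μ_D²/μ_S²)·p^{int}_{S|1}/p^{int}_{S,0} + p^{int}_{D|1}/p^{int}_{D,0} − p^{int}_{V|1}/p^{int}_{V,0}, and λ := −Δ^{−1}·(μ_D²/μ_S²)/p^{int}_{S,0}, ζ := Δ^{−1}/p^{int}_{D,0}, γ := −Δ^{−1}/p^{int}_{V,0}. Then λ ≤ 0, ζ ≥ 0, γ ≤ 0, and q(1) ≥ λ·q_S + ζ·q_D + γ·q_V. (Proposition 5: decoy-state lower bound on the single-photon detection probability.)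 -/

import Mathlib

set_option maxHeartbeats 1000000 in
/-- **Proposition 5 (decoy-state lower bound on the single-photon detection probability).**
With signal/decoy/vacuum Poisson photon-number distributions, the single-photon detection
probability `q 1` is lower bounded by the linear combination
`λ·q_S + ζ·q_D + γ·q_V` with `λ ≤ 0`, `ζ ≥ 0`, `γ ≤ 0`. -/
theorem statement5 (μS μD pS pD pV : ℝ) (hμSD : μD < μS) (hμD : 0 < μD)
    (hpS : 0 < pS) (hpD : 0 < pD) (hpV : 0 < pV)
    (q : ℕ → ℝ) (hq : ∀ n, 0 ≤ q n) (hqsum : Summable q) (hq1 : ∑' n, q n ≤ 1) :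
    let PS : ℕ → ℝ := fun n => Real.exp (-μS) * μS ^ n / n.factorial
    let PD : ℕ → ℝ := fun n => Real.exp (-μD) * μD ^ n / n.factorial
    let PV : ℕ → ℝ := fun n => if n = 0 then 1 else 0
    let pint : ℕ → ℝ := fun n => pS * PS n + pD * PD n + pV * PV n
    let cS : ℕ → ℝ := fun n => pS * PS n / pint n
    let cD : ℕ → ℝ := fun n => pD * PD n / pint n
    let cV : ℕ → ℝ := fun n => pV * PV n / pint n
    let pS0 : ℝ := pS * PS 0
    let pD0 : ℝ := pD * PD 0
    let pV0 : ℝ := pV * PV 0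
    let qS : ℝ := ∑' n, cS n * q n
    let qD : ℝ := ∑' n, cD n * q n
    let qV : ℝ := ∑' n, cV n * q n
    let Δ : ℝ := -(μD ^ 2 / μS ^ 2) * (cS 1 / pS0) + cD 1 / pD0 - cV 1 / pV0
    let lam : ℝ := -(Δ⁻¹ * ((μD ^ 2 / μS ^ 2) / pS0))
    let ζ : ℝ := Δ⁻¹ / pD0
    let γ : ℝ := -(Δ⁻¹ / pV0)
    lam ≤ 0 ∧ 0 ≤ ζ ∧ γ ≤ 0 ∧ lam * qS + ζ * qD + γ * qV ≤ q 1 := by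
  intro PS PD PV pint cS cD cV pS0 pD0 pV0 qS qD qV Δ lam ζ γ
  have hPSd : PS = fun n => Real.exp (-μS) * μS ^ n / n.factorial := rfl
  have hPDd : PD = fun n => Real.exp (-μD) * μD ^ n / n.factorial := rfl
  have hPVd : PV = fun n => if n = 0 then 1 else 0 := rfl
  have hpintd : pint = fun n => pS * PS n + pD * PD n + pV * PV n := rfl
  have hcSd : cS = fun n => pS * PS n / pint n := rfl
  have hcDd : cD = fun n => pD * PD n / pint n := rfl
  have hcVd : cV = fun n => pV * PV n / pint n := rfl
  have hpS0d : pS0 = pS * PS 0 := rfl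
  have hpD0d : pD0 = pD * PD 0 := rfl
  have hpV0d : pV0 = pV * PV 0 := rfl
  have hqSd : qS = ∑' n, cS n * q n := rfl
  have hqDd : qD = ∑' n, cD n * q n := rfl
  have hqVd : qV = ∑' n, cV n * q n := rfl
  have hΔd : Δ = -(μD ^ 2 / μS ^ 2) * (cS 1 / pS0) + cD 1 / pD0 - cV 1 / pV0 := rfl
  have hlamd : lam = -(Δ⁻¹ * ((μD ^ 2 / μS ^ 2) / pS0)) := rfl
  have hζd : ζ = Δ⁻¹ / pD0 := rfl
  have hγd : γ = -(Δ⁻¹ / pV0) := rfl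
  clear_value γ ζ lam Δ qV qD qS pV0 pD0 pS0 cV cD cS pint PV
  have hμS : 0 < μS := hμD.trans hμSD
  have hPSpos : ∀ n, 0 < PS n := by
    intro n; rw [hPSd]; positivity
  have hPDpos : ∀ n, 0 < PD n := by
    intro n; rw [hPDd]; positivity
  have hPVnn : ∀ n, 0 ≤ PV n := by
    intro n; rw [hPVd]; dsimp only; split <;> norm_num
  have hpint : ∀ n, 0 < pint n := by
    intro n
    rw [hpintd]
    exact add_pos_of_pos_of_nonneg
      (add_pos (mul_pos hpS (hPSpos n)) (mul_pos hpD (hPDpos n)))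
      (mul_nonneg hpV.le (hPVnn n))
  have hPS0 : PS 0 = Real.exp (-μS) := by rw [hPSd]; norm_num
  have hPD0 : PD 0 = Real.exp (-μD) := by rw [hPDd]; norm_num
  have hPV0 : PV 0 = 1 := by rw [hPVd]; norm_num
  have hPV1 : PV 1 = 0 := by rw [hPVd]; norm_num
  have hPVn : ∀ m : ℕ, PV (m + 1) = 0 := by intro m; rw [hPVd]; simp
  have hpS0 : 0 < pS0 := by rw [hpS0d]; exact mul_pos hpS (hPSpos 0)
  have hpD0 : 0 < pD0 := by rw [hpD0d]; exact mul_pos hpD (hPDpos 0)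
  have hpV0 : pV0 = pV := by rw [hpV0d, hPV0, mul_one]
  have hcV1 : cV 1 = 0 := by rw [hcVd]; dsimp only; rw [hPV1]; simp
  have hΔ : Δ = μD * (μS - μD) / (μS * pint 1) := by
    rw [hΔd, hcV1, hcSd, hcDd, hpS0d, hpD0d, hPS0, hPD0]
    dsimp only
    rw [hPSd, hPDd]
    dsimp only
    rw [zero_div, sub_zero]
    have h1 : pint 1 ≠ 0 := (hpint 1).ne'
    field_simp
    ring
  have hΔpos : 0 < Δ := by
    rw [hΔ]
    exact div_pos (mul_pos hμD (sub_pos.mpr hμSD)) (mul_pos hμS (hpint 1))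
  -- coefficient formula
  have hAn : ∀ n : ℕ, lam * cS n + ζ * cD n + γ * cV n
      = Δ⁻¹ * ((μD ^ n - (μD ^ 2 / μS ^ 2) * μS ^ n) / (n.factorial * pint n) - PV n / pint n) := by
    intro n
    have hfac : (n.factorial : ℝ) ≠ 0 := Nat.cast_ne_zero.mpr n.factorial_ne_zero
    rw [hlamd, hζd, hγd, hcSd, hcDd, hcVd, hpS0d, hpD0d, hpV0, hPS0, hPD0]
    dsimp only
    rw [hPSd, hPDd]
    dsimp only
    have h1 : pint n ≠ 0 := (hpint n).ne'
    field_simp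
    ring
  -- summability
  have hsS : Summable fun n => cS n * q n := by
    apply hqsum.of_nonneg_of_le
    · intro n
      rw [hcSd]
      exact mul_nonneg (div_nonneg (mul_pos hpS (hPSpos n)).le (hpint n).le) (hq n)
    · intro n
      have h1 : cS n ≤ 1 := by
        rw [hcSd]; dsimp only
        rw [div_le_one (hpint n)]; simp only [hpintd]
        nlinarith [mul_pos hpD (hPDpos n), mul_nonneg hpV.le (hPVnn n)]
      nlinarith [hq n, h1, mul_nonneg (div_nonneg (mul_pos hpS (hPSpos n)).le (hpint n).le) (hq n)]
  have hsD : Summable fun n => cD n * q n := by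
    apply hqsum.of_nonneg_of_le
    · intro n
      rw [hcDd]
      exact mul_nonneg (div_nonneg (mul_pos hpD (hPDpos n)).le (hpint n).le) (hq n)
    · intro n
      have h1 : cD n ≤ 1 := by
        rw [hcDd]; dsimp only
        rw [div_le_one (hpint n)]; simp only [hpintd]
        nlinarith [mul_pos hpS (hPSpos n), mul_nonneg hpV.le (hPVnn n)]
      nlinarith [hq n, h1]
  have hsV : Summable fun n => cV n * q n := by
    apply hqsum.of_nonneg_of_le
    · intro n
      rw [hcVd]
      exact mul_nonneg (div_nonneg (mul_nonneg hpV.le (hPVnn n)) (hpint n).le) (hq n)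
    · intro n
      have h1 : cV n ≤ 1 := by
        rw [hcVd]; dsimp only
        rw [div_le_one (hpint n)]; simp only [hpintd]
        nlinarith [mul_pos hpS (hPSpos n), mul_pos hpD (hPDpos n)]
      nlinarith [hq n, h1]
  refine ⟨?_, ?_, ?_, ?_⟩
  · rw [hlamd]
    have : 0 ≤ Δ⁻¹ * ((μD ^ 2 / μS ^ 2) / pS0) := by positivity
    linarith
  · rw [hζd]; positivity
  · rw [hγd]
    have : 0 ≤ Δ⁻¹ / pV0 := by rw [hpV0]; positivity
    linarith
  · -- main inequality
    have hcomb : lam * qS + ζ * qD + γ * qV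
        = ∑' n, (lam * cS n + ζ * cD n + γ * cV n) * q n := by
      rw [hqSd, hqDd, hqVd]
      rw [← tsum_mul_left, ← tsum_mul_left, ← tsum_mul_left,
        ← Summable.tsum_add (hsS.mul_left lam) (hsD.mul_left ζ),
        ← Summable.tsum_add ((hsS.mul_left lam).add (hsD.mul_left ζ)) (hsV.mul_left γ)]
      exact tsum_congr fun n => by ring
    rw [hcomb]
    have hsA : Summable fun n => (lam * cS n + ζ * cD n + γ * cV n) * q n := by
      apply Summable.congr (((hsS.mul_left lam).add (hsD.mul_left ζ)).add (hsV.mul_left γ))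
      intro n; ring
    have hbound : ∀ n, (lam * cS n + ζ * cD n + γ * cV n) * q n
        ≤ if n = 1 then q 1 else 0 := by
      intro n
      rw [hAn n]
      match n with
      | 1 =>
        rw [if_pos rfl]
        have hkey : Δ⁻¹ * ((μD ^ 1 - μD ^ 2 / μS ^ 2 * μS ^ 1)
            / ((Nat.factorial 1 : ℝ) * pint 1) - PV 1 / pint 1) = 1 := by
          rw [hPV1, zero_div, sub_zero]
          have h1 : (μD ^ 1 - μD ^ 2 / μS ^ 2 * μS ^ 1)
              / ((Nat.factorial 1 : ℝ) * pint 1) = Δ := by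
            rw [hΔ]
            have h2 : pint 1 ≠ 0 := (hpint 1).ne'
            field_simp
            ring
          rw [h1, inv_mul_cancel₀ hΔpos.ne']
        rw [hkey, one_mul]
      | 0 =>
        rw [if_neg (by norm_num : (0:ℕ) ≠ 1)]
        have h3 : 0 ≤ μD ^ 2 / μS ^ 2 := by positivity
        have hbr : (μD ^ 0 - μD ^ 2 / μS ^ 2 * μS ^ 0)
            / ((Nat.factorial 0 : ℝ) * pint 0) - PV 0 / pint 0 ≤ 0 := by
          rw [hPV0]
          rw [show ((Nat.factorial 0 : ℝ)) = 1 by norm_num, one_mul]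
          rw [div_sub_div_same]
          apply div_nonpos_of_nonpos_of_nonneg _ (hpint 0).le
          simp only [pow_zero]
          linarith
        have h4 : Δ⁻¹ * ((μD ^ 0 - μD ^ 2 / μS ^ 2 * μS ^ 0)
            / ((Nat.factorial 0 : ℝ) * pint 0) - PV 0 / pint 0) ≤ 0 :=
          mul_nonpos_of_nonneg_of_nonpos (by positivity) hbr
        exact mul_nonpos_of_nonpos_of_nonneg h4 (hq 0)
      | (m+2) =>
        rw [if_neg (by omega : m + 2 ≠ 1)]
        have hPVm2 : PV (m+2) = 0 := hPVn (m+1)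
        have hnum : μD ^ (m+2) - μD ^ 2 / μS ^ 2 * μS ^ (m+2) ≤ 0 := by
          have h1 : μD ^ 2 / μS ^ 2 * μS ^ (m + 2) = μD ^ 2 * μS ^ m := by
            field_simp
            ring
          have h2 : μD ^ m ≤ μS ^ m := pow_le_pow_left₀ hμD.le hμSD.le m
          rw [h1]
          have h3 : μD ^ (m + 2) = μD ^ 2 * μD ^ m := by ring
          rw [h3]
          nlinarith [sq_nonneg μD]
        have h4 : Δ⁻¹ * ((μD ^ (m+2) - μD ^ 2 / μS ^ 2 * μS ^ (m+2))
            / ((Nat.factorial (m+2) : ℝ) * pint (m+2)) - PV (m+2) / pint (m+2)) ≤ 0 := by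
          rw [hPVm2, zero_div, sub_zero]
          apply mul_nonpos_of_nonneg_of_nonpos (by positivity)
          exact div_nonpos_of_nonpos_of_nonneg hnum
            (mul_nonneg (Nat.cast_nonneg _) (hpint (m+2)).le)
        exact mul_nonpos_of_nonpos_of_nonneg h4 (hq (m+2))
    calc ∑' n, (lam * cS n + ζ * cD n + γ * cV n) * q n
        ≤ ∑' n, if n = 1 then q 1 else 0 :=
          Summable.tsum_le_tsum hbound hsA ((hasSum_ite_eq 1 (q 1)).summable)
      _ = q 1 := tsum_ite_eq 1 (fun _ => q 1)
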